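/- arXiv:math-ph/0111032 — 4 statements merged into one kernel-verified Lean document; each statement's English description precedes it below -/
import Mathlib

section
/- Let Ω : ℝ³ → ℝ be continuously differentiable and let O ∈ ℝ be such that |∇Ω(q)| ≤ 1 for every q ∈ ℝ³ with Ω(q) ≤ O. Define E₀(P) := inf_{k ∈ ℝ³} (Ω(P − k) + |k|). Then for every P ∈ ℝ³ with Ω(P) ≤ O one has E₀(P) = Ω(P). -/
/-- Key lemma: under the gradient bound on the sublevel set, `Ω` satisfies a reverse
Lipschitz-type bound from any point of the sublevel set. -/
lemma statement3_key (Ω : EuclideanSpace ℝ (Fin 3) → ℝ) (hΩ : ContDiff ℝ 1 Ω) (O : ℝ)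
    (hgrad : ∀ q : EuclideanSpace ℝ (Fin 3), Ω q ≤ O → ‖gradient Ω q‖ ≤ 1)
    (P q : EuclideanSpace ℝ (Fin 3)) (hP : Ω P ≤ O) :
    Ω P ≤ Ω q + ‖P - q‖ := by
  set v : EuclideanSpace ℝ (Fin 3) := q - P with hv
  set L : ℝ := ‖v‖ with hL
  have hLPq : ‖P - q‖ = L := by rw [hL, hv, norm_sub_rev]
  have hL0 : 0 ≤ L := norm_nonneg v
  set γ : ℝ → EuclideanSpace ℝ (Fin 3) := fun t => P + t • v with hγ
  set f : ℝ → ℝ := fun t => Ω (γ t) with hf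
  have hγ0 : γ 0 = P := by simp [hγ]
  have hγ1 : γ 1 = q := by simp [hγ, hv]
  have hf0 : f 0 = Ω P := by rw [hf]; simp [hγ0]
  have hf1 : f 1 = Ω q := by rw [hf]; simp [hγ1]
  have hder : ∀ t : ℝ, HasDerivAt f (fderiv ℝ Ω (γ t) v) t := by
    intro t
    have h1 : HasDerivAt (fun t : ℝ => P + t • v) v t := by
      simpa using ((hasDerivAt_id t).smul_const v).const_add P
    exact ((hΩ.differentiable one_ne_zero) (γ t)).hasFDerivAt.comp_hasDerivAt t h1
  have hcont : Continuous f := by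
    apply hΩ.continuous.comp
    continuity
  have hbound : ∀ t : ℝ, f t ≤ O → ‖fderiv ℝ Ω (γ t) v‖ ≤ L := by
    intro t ht
    have hgr : fderiv ℝ Ω (γ t) v = inner ℝ (gradient Ω (γ t)) v := by
      rw [gradient, InnerProductSpace.toDual_symm_apply]
    rw [hgr]
    calc ‖(inner ℝ (gradient Ω (γ t)) v : ℝ)‖
        ≤ ‖gradient Ω (γ t)‖ * ‖v‖ := norm_inner_le_norm _ _
      _ ≤ 1 * ‖v‖ := by
          apply mul_le_mul_of_nonneg_right _ (norm_nonneg v)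
          exact hgrad (γ t) ht
      _ = L := by rw [one_mul]
  -- the set of times where f has not dropped below f 0
  set S : Set ℝ := Set.Icc (0:ℝ) 1 ∩ {t | f 0 ≤ f t} with hS
  have hS0 : (0:ℝ) ∈ S := ⟨⟨le_refl _, zero_le_one⟩, by simp [Set.mem_setOf_eq]⟩
  have hScomp : IsCompact S := isCompact_Icc.inter_right (isClosed_le continuous_const hcont)
  set t₁ : ℝ := sSup S with ht₁
  have ht₁mem : t₁ ∈ S := hScomp.sSup_mem ⟨0, hS0⟩
  obtain ⟨⟨ht₁0, ht₁1⟩, ht₁f⟩ := ht₁mem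
  rcases eq_or_lt_of_le ht₁1 with heq | hlt
  · -- t₁ = 1 : f 1 ≥ f 0
    have : f 0 ≤ f 1 := by rw [← heq]; exact ht₁f
    rw [hf0, hf1] at this
    linarith [hLPq ▸ hL0, this]
  · -- t₁ < 1
    have hsub : ∀ s, s ∈ Set.Ioc t₁ 1 → f s ≤ f 0 := by
      intro s hs
      by_contra h
      push_neg at h
      have hsS : s ∈ S := ⟨⟨le_trans ht₁0 hs.1.le, hs.2⟩, h.le⟩
      have : s ≤ t₁ := le_csSup hScomp.bddAbove hsS
      exact absurd hs.1 (not_lt.mpr this)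
    have hft₁le : f t₁ ≤ f 0 := by
      have htend : Filter.Tendsto f (nhdsWithin t₁ (Set.Ioi t₁)) (nhds (f t₁)) :=
        (hcont.continuousAt.tendsto).mono_left nhdsWithin_le_nhds
      refine le_of_tendsto htend ?_
      filter_upwards [Ioc_mem_nhdsGT_of_mem ⟨le_refl _, hlt⟩] with s hs
      exact hsub s hs
    have hft₁ : f t₁ = f 0 := le_antisymm hft₁le ht₁f
    have hfO : ∀ s ∈ Set.Icc t₁ 1, f s ≤ O := by
      intro s hs
      rcases eq_or_lt_of_le hs.1 with h | h
      · rw [← h, hft₁, hf0]; exact hP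
      · exact le_trans (hsub s ⟨h, hs.2⟩) (hf0 ▸ hP)
    -- mean value inequality on [t₁, 1]
    have hmvt : ‖f 1 - f t₁‖ ≤ L * ‖(1:ℝ) - t₁‖ := by
      apply Convex.norm_image_sub_le_of_norm_hasDerivWithin_le
        (f' := fun t => fderiv ℝ Ω (γ t) v) (s := Set.Icc t₁ 1)
      · exact fun x hx => (hder x).hasDerivWithinAt
      · exact fun x hx => hbound x (hfO x hx)
      · exact convex_Icc _ _
      · exact ⟨le_refl _, hlt.le⟩
      · exact ⟨hlt.le, le_refl _⟩
    have h1t₁ : ‖(1:ℝ) - t₁‖ ≤ 1 := by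
      rw [Real.norm_eq_abs, abs_of_nonneg (by linarith)]
      linarith
    have hstep : f 1 - f t₁ ≥ -L := by
      have h2 : ‖f 1 - f t₁‖ ≤ L := le_trans hmvt (by nlinarith)
      have := abs_le.mp (Real.norm_eq_abs _ ▸ h2)
      linarith [this.1]
    rw [hft₁, hf0, hf1] at hstep
    linarith [hLPq ▸ le_refl L, hstep, hLPq.symm ▸ hL0, (by rw [hLPq] : ‖P - q‖ = L)]

/-- If `Ω : ℝ³ → ℝ` is `C¹` and `|∇Ω| ≤ 1` on the sublevel set `{Ω ≤ O}`,
then the free ground-state energy `E₀(P) = inf_k (Ω(P - k) + |k|)` equals `Ω(P)` whenever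
`Ω(P) ≤ O`. -/
theorem statement3 (Ω : EuclideanSpace ℝ (Fin 3) → ℝ) (hΩ : ContDiff ℝ 1 Ω) (O : ℝ)
    (hgrad : ∀ q : EuclideanSpace ℝ (Fin 3), Ω q ≤ O → ‖gradient Ω q‖ ≤ 1) :
    ∀ P : EuclideanSpace ℝ (Fin 3), Ω P ≤ O →
      (⨅ k : EuclideanSpace ℝ (Fin 3), (Ω (P - k) + ‖k‖)) = Ω P := by
  intro P hP
  have hle : ∀ k : EuclideanSpace ℝ (Fin 3), Ω P ≤ Ω (P - k) + ‖k‖ := by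
    intro k
    have h := statement3_key Ω hΩ O hgrad P (P - k) hP
    simpa using h
  apply le_antisymm
  · have hbdd : BddBelow (Set.range fun k : EuclideanSpace ℝ (Fin 3) => Ω (P - k) + ‖k‖) := by
      refine ⟨Ω P, ?_⟩
      rintro x ⟨k, rfl⟩
      exact hle k
    have := ciInf_le hbdd (0 : EuclideanSpace ℝ (Fin 3))
    simpa using this
  · exact le_ciInf hle
end

section
/- Let Ω : ℝ³ → ℝ be continuously differentiable and let O ∈ ℝ be such that |∇Ω(q)| ≤ 1 for every q ∈ ℝ³ with Ω(q) ≤ O. Define E₀(P) := inf_{k ∈ ℝ³} (Ω(P − k) + |k|). Then for every P ∈ ℝ³, if E₀(P) ≤ O then Ω(P) ≤ O. -/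
open Set

/-- If `Ω : ℝ³ → ℝ` is `C¹` and `|∇Ω| ≤ 1` on the sublevel set `{Ω ≤ O}`,
and `E₀(P) := inf_k (Ω(P - k) + |k|)` satisfies `E₀(P) ≤ O`, then `Ω(P) ≤ O`. -/
theorem statement4 (Ω : EuclideanSpace ℝ (Fin 3) → ℝ) (hΩ : ContDiff ℝ 1 Ω) (O : ℝ)
    (hgrad : ∀ q : EuclideanSpace ℝ (Fin 3), Ω q ≤ O → ‖gradient Ω q‖ ≤ 1) :
    ∀ P : EuclideanSpace ℝ (Fin 3),
      (⨅ k : EuclideanSpace ℝ (Fin 3), (Ω (P - k) + ‖k‖)) ≤ O → Ω P ≤ O := by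
  intro P hinf
  by_contra hP
  push_neg at hP
  have hΩd : Differentiable ℝ Ω := hΩ.differentiable one_ne_zero
  have hΩc : Continuous Ω := hΩd.continuous
  -- translate gradient bound to fderiv bound
  have hfd : ∀ q, Ω q ≤ O → ‖fderiv ℝ Ω q‖ ≤ 1 := by
    intro q hq
    have h := hgrad q hq
    rwa [gradient, LinearIsometryEquiv.norm_map] at h
  set d : ℝ := (Ω P - O) / 2 with hd
  have hd0 : 0 < d := by simp only [hd]; linarith
  -- a ball around P where Ω > O + d
  obtain ⟨δ, hδ0, hδ⟩ := Metric.continuousAt_iff.mp hΩc.continuousAt d hd0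
  set r : ℝ := δ / 2 with hrdef
  have hr0 : 0 < r := by positivity
  have hball : ∀ x : EuclideanSpace ℝ (Fin 3), dist x P ≤ r → O + d < Ω x := by
    intro x hx
    have hxδ : dist x P < δ := lt_of_le_of_lt hx (by simp only [hrdef]; linarith)
    have := hδ hxδ
    rw [Real.dist_eq, abs_lt] at this
    simp only [hd] at *
    linarith [this.1]
  -- key pointwise lower bound
  have key : ∀ k : EuclideanSpace ℝ (Fin 3), O + min d r ≤ Ω (P - k) + ‖k‖ := by
    intro k
    have hnk : (0:ℝ) ≤ ‖k‖ := norm_nonneg k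
    by_cases hk : Ω (P - k) ≤ O
    · -- the interesting case: follow the segment
      set ψ : ℝ → ℝ := fun u => Ω (P - u • k) with hψdef
      have hψc : Continuous ψ :=
        hΩc.comp (continuous_const.sub (continuous_id.smul continuous_const))
      set T : Set ℝ := Icc (0:ℝ) 1 ∩ {u | O ≤ ψ u} with hTdef
      have hT0 : (0:ℝ) ∈ T := by
        constructor
        · exact ⟨le_refl 0, zero_le_one⟩
        · show O ≤ ψ 0
          simp only [hψdef, zero_smul, sub_zero]
          linarith
      have hTcpt : IsCompact T :=
        isCompact_Icc.inter_right (isClosed_le continuous_const hψc)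
      set s : ℝ := sSup T with hsdef
      have hsT : s ∈ T := hTcpt.sSup_mem ⟨0, hT0⟩
      have hs0 : 0 ≤ s := hsT.1.1
      have hs1 : s ≤ 1 := hsT.1.2
      have hψs : O ≤ ψ s := hsT.2
      have hbdd : BddAbove T := hTcpt.bddAbove
      have hlt : ∀ u, s < u → u ≤ 1 → ψ u < O := by
        intro u hsu hu1
        by_contra hge
        push_neg at hge
        have : u ∈ T := ⟨⟨le_trans hs0 hsu.le, hu1⟩, hge⟩
        exact absurd (le_csSup hbdd this) (not_le.mpr hsu)
      have hψsle : ψ s ≤ O := by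
        rcases eq_or_lt_of_le hs1 with hseq | hslt
        · have : ψ s = Ω (P - k) := by rw [hseq]; simp [hψdef]
          rw [this]; exact hk
        · by_contra hgt
          push_neg at hgt
          have hmem : {u : ℝ | O < ψ u} ∈ nhds s :=
            (isOpen_lt continuous_const hψc).mem_nhds hgt
          obtain ⟨ε, hε0, hεsub⟩ := Metric.mem_nhds_iff.mp hmem
          set u : ℝ := min (s + ε / 2) 1 with hudef
          have hsu : s < u := lt_min (by linarith) hslt
          have hu1 : u ≤ 1 := min_le_right _ _
          have huball : u ∈ Metric.ball s ε := by
            rw [Metric.mem_ball, Real.dist_eq, abs_lt]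
            constructor
            · linarith
            · have : u ≤ s + ε / 2 := min_le_left _ _
              linarith
          exact absurd (hεsub huball) (not_lt.mpr (hlt u hsu hu1).le)
      -- derivative of ψ
      have hderiv : ∀ u : ℝ, HasDerivAt ψ ((fderiv ℝ Ω (P - u • k)) (-k)) u := by
        intro u
        have h1 : HasDerivAt (fun u : ℝ => P - u • k) (-k) u := by
          have h2 : HasDerivAt (fun u : ℝ => u • k) ((1:ℝ) • k) u :=
            (hasDerivAt_id u).smul_const k
          simpa using h2.const_sub P
        exact (hΩd (P - u • k)).hasFDerivAt.comp_hasDerivAt u h1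
      -- MVT on [s, 1]
      have hmvt := norm_image_sub_le_of_norm_deriv_le_segment'
        (f := ψ) (f' := fun u => (fderiv ℝ Ω (P - u • k)) (-k)) (a := s) (b := 1) (C := ‖k‖)
        (fun u _ => (hderiv u).hasDerivWithinAt)
        (by
          intro u hu
          have hψu : Ω (P - u • k) ≤ O := by
            rcases eq_or_lt_of_le hu.1 with heq | hlt'
            · rw [← heq]; exact hψsle
            · exact (hlt u hlt' hu.2.le).le
          calc ‖(fderiv ℝ Ω (P - u • k)) (-k)‖
              ≤ ‖fderiv ℝ Ω (P - u • k)‖ * ‖-k‖ := ContinuousLinearMap.le_opNorm _ _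
            _ ≤ 1 * ‖k‖ := by
                rw [norm_neg]
                exact mul_le_mul_of_nonneg_right (hfd _ hψu) hnk
            _ = ‖k‖ := one_mul _)
        1 (right_mem_Icc.mpr hs1)
      have hψ1 : ψ 1 = Ω (P - k) := by simp [hψdef]
      have habs : |ψ 1 - ψ s| ≤ ‖k‖ * (1 - s) := hmvt
      have hlow : O - ‖k‖ * (1 - s) ≤ Ω (P - k) := by
        rw [← hψ1]
        have := (abs_le.mp habs).1
        linarith
      -- P - s • k is outside the ball
      have hout : r < s * ‖k‖ := by
        by_contra hle
        push_neg at hle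
        have hdist : dist (P - s • k) P ≤ r := by
          rw [dist_eq_norm]
          have : P - s • k - P = -(s • k) := by abel
          rw [this, norm_neg, norm_smul, Real.norm_eq_abs, abs_of_nonneg hs0]
          exact hle
        have := hball _ hdist
        have : O + d < ψ s := this
        linarith
      have hs1k : ‖k‖ * (1 - s) ≤ ‖k‖ - s * ‖k‖ := by nlinarith
      have : O + min d r ≤ O + r := by simp [min_le_right]
      nlinarith [min_le_right d r]
    · -- easy case : Ω (P - k) > O
      push_neg at hk
      by_cases hkr : ‖k‖ ≤ r
      · have hdist : dist (P - k) P ≤ r := by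
          rw [dist_eq_norm]
          have : P - k - P = -k := by abel
          rw [this, norm_neg]; exact hkr
        have := hball _ hdist
        have hmin : min d r ≤ d := min_le_left _ _
        linarith
      · push_neg at hkr
        have hmin : min d r ≤ r := min_le_right _ _
        linarith
  have hge : O + min d r ≤ ⨅ k : EuclideanSpace ℝ (Fin 3), (Ω (P - k) + ‖k‖) :=
    le_ciInf key
  have : 0 < min d r := lt_min hd0 hr0
  linarith
end

section
/- Let Ω : ℝ³ → ℝ be twice continuously differentiable with B := sup_{p ∈ ℝ³} ‖D²Ω(p)‖ < ∞, where D²Ω(p) is the Hessian of Ω at p and ‖·‖ its operator norm. Let β > 0 and let O ∈ ℝ be such that |∇Ω(q)| ≤ β for every q with Ω(q) ≤ O. Then for every P ∈ ℝ³ with Ω(P) ≤ O and all k, q ∈ ℝ³ one has Ω(P − k − q) − Ω(P − q) ≥ −β·|k| − B·|k|·|q|. -/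
open Set

local notation "E" => EuclideanSpace ℝ (Fin 3)

lemma norm_grad_eq (Ω : E → ℝ) (x : E) : ‖gradient Ω x‖ = ‖fderiv ℝ Ω x‖ := by
  rw [gradient]
  exact LinearIsometryEquiv.norm_map _ _

lemma snd_deriv_bound (Ω : E → ℝ) (B : ℝ)
    (hB : ∀ p : E, ‖iteratedFDeriv ℝ 2 Ω p‖ ≤ B) (x : E) :
    ‖fderiv ℝ (fderiv ℝ Ω) x‖ ≤ B := by
  calc ‖fderiv ℝ (fderiv ℝ Ω) x‖
      = ‖iteratedFDeriv ℝ 0 (fderiv ℝ (fderiv ℝ Ω)) x‖ := (norm_iteratedFDeriv_zero (f := fderiv ℝ (fderiv ℝ Ω)) (x := x)).symm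
    _ = ‖iteratedFDeriv ℝ 1 (fderiv ℝ Ω) x‖ := norm_iteratedFDeriv_fderiv
    _ = ‖iteratedFDeriv ℝ 2 Ω x‖ := norm_iteratedFDeriv_fderiv
    _ ≤ B := hB x

lemma grad_lip (Ω : E → ℝ) (hΩ : ContDiff ℝ 2 Ω) (B : ℝ)
    (hB : ∀ p : E, ‖iteratedFDeriv ℝ 2 Ω p‖ ≤ B) (x y : E) :
    ‖fderiv ℝ Ω x - fderiv ℝ Ω y‖ ≤ B * ‖x - y‖ := by
  have hd : ContDiff ℝ 1 (fderiv ℝ Ω) := hΩ.fderiv_right (by norm_num)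
  exact (convex_univ).norm_image_sub_le_of_norm_fderiv_le
    (fun z _ => (hd.differentiable one_ne_zero).differentiableAt)
    (fun z _ => snd_deriv_bound Ω B hB z) (mem_univ y) (mem_univ x)

lemma escape (Ω : E → ℝ) (hΩ : ContDiff ℝ 2 Ω)
    (β : ℝ) (hβ : 0 < β) (O : ℝ)
    (hgrad : ∀ q : E, Ω q ≤ O → ‖gradient Ω q‖ ≤ β)
    (P : E) (hP : Ω P ≤ O) (k : E) :
    Ω (P - k) ≥ Ω P - β * ‖k‖ := by
  by_contra hcon
  push_neg at hcon
  set h : ℝ → ℝ := fun t => Ω (P - t • k) with hh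
  have hcont : Continuous h := hΩ.continuous.comp (continuous_const.sub (continuous_id.smul continuous_const))
  have hβk : 0 ≤ β * ‖k‖ := mul_nonneg hβ.le (norm_nonneg k)
  have h1 : h 1 < Ω P - β * ‖k‖ := by simpa [hh, one_smul] using hcon
  set S : Set ℝ := Icc (0:ℝ) 1 ∩ {t | Ω P ≤ h t} with hS
  have h0S : (0:ℝ) ∈ S := by
    constructor
    · exact ⟨le_refl 0, zero_le_one⟩
    · simp [hh]
  have hSclosed : IsClosed S := isClosed_Icc.inter (isClosed_le continuous_const hcont)
  have hSbdd : BddAbove S := ⟨1, fun t ht => ht.1.2⟩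
  set t₁ := sSup S with ht₁def
  have ht₁S : t₁ ∈ S := hSclosed.csSup_mem ⟨0, h0S⟩ hSbdd
  have ht₁0 : 0 ≤ t₁ := ht₁S.1.1
  have ht₁1 : t₁ ≤ 1 := ht₁S.1.2
  have hΩt₁ : Ω P ≤ h t₁ := ht₁S.2
  have ht₁ne : t₁ ≠ 1 := by
    intro he
    rw [he] at hΩt₁
    linarith
  have ht₁lt : t₁ < 1 := lt_of_le_of_ne ht₁1 ht₁ne
  -- points strictly after t₁ are below Ω P
  have hafter : ∀ t, t ∈ Ioc t₁ 1 → h t < Ω P := by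
    intro t ht
    by_contra hge
    push_neg at hge
    have : t ∈ S := ⟨⟨le_trans ht₁0 ht.1.le, ht.2⟩, hge⟩
    exact absurd (le_csSup hSbdd this) (not_le.mpr ht.1)
  -- h t₁ ≤ Ω P by continuity from the right
  have hle : h t₁ ≤ Ω P := by
    have htend : Filter.Tendsto h (nhdsWithin t₁ (Ioi t₁)) (nhds (h t₁)) :=
      hcont.continuousAt.continuousWithinAt.tendsto
    refine le_of_tendsto htend ?_
    filter_upwards [Ioc_mem_nhdsGT_of_mem ⟨le_refl t₁, ht₁lt⟩] with t ht
    exact (hafter t ht).le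
  -- Ω ≤ O on the path for t ∈ [t₁, 1]
  have hpath : ∀ t ∈ Icc t₁ 1, Ω (P - t • k) ≤ O := by
    intro t ht
    rcases eq_or_lt_of_le ht.1 with he | hlt
    · rw [← he]; exact le_trans hle hP
    · exact le_trans (hafter t ⟨hlt, ht.2⟩).le hP
  -- mean value on [t₁, 1]
  have hdiff : ∀ t ∈ Icc t₁ 1,
      HasDerivWithinAt h (fderiv ℝ Ω (P - t • k) (-k)) (Icc t₁ 1) t := by
    intro t _
    have hγ : HasDerivAt (fun t : ℝ => P - t • k) (-k) t := by
      simpa using ((hasDerivAt_id t).smul_const k).const_sub P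
    have hf : HasFDerivAt Ω (fderiv ℝ Ω (P - t • k)) (P - t • k) :=
      ((hΩ.differentiable (by norm_num)) _).hasFDerivAt
    exact (hf.comp_hasDerivAt t hγ).hasDerivWithinAt
  have hbound : ∀ t ∈ Ico t₁ 1, ‖fderiv ℝ Ω (P - t • k) (-k)‖ ≤ β * ‖k‖ := by
    intro t ht
    calc ‖fderiv ℝ Ω (P - t • k) (-k)‖
        ≤ ‖fderiv ℝ Ω (P - t • k)‖ * ‖-k‖ := (fderiv ℝ Ω (P - t • k)).le_opNorm _
      _ = ‖gradient Ω (P - t • k)‖ * ‖k‖ := by rw [norm_grad_eq, norm_neg]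
      _ ≤ β * ‖k‖ := by
          have := hgrad (P - t • k) (hpath t ⟨ht.1, ht.2.le⟩)
          exact mul_le_mul_of_nonneg_right this (norm_nonneg k)
  have hmv := norm_image_sub_le_of_norm_deriv_le_segment' hdiff hbound 1 ⟨ht₁lt.le, le_refl 1⟩
  have habs : |h 1 - h t₁| ≤ β * ‖k‖ * (1 - t₁) := by simpa [Real.norm_eq_abs] using hmv
  have h1t₁ : β * ‖k‖ * (1 - t₁) ≤ β * ‖k‖ := by nlinarith
  have := abs_le.mp habs
  linarith

lemma diff_bound (Ω : E → ℝ) (hΩ : ContDiff ℝ 2 Ω) (B : ℝ)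
    (hB : ∀ p : E, ‖iteratedFDeriv ℝ 2 Ω p‖ ≤ B) (q x y : E) :
    ‖(Ω (x - q) - Ω x) - (Ω (y - q) - Ω y)‖ ≤ B * ‖q‖ * ‖x - y‖ := by
  have hd : Differentiable ℝ Ω := hΩ.differentiable (by norm_num)
  have hder : ∀ z : E, HasFDerivAt (fun w => Ω (w - q) - Ω w)
      (fderiv ℝ Ω (z - q) - fderiv ℝ Ω z) z := by
    intro z
    have h1 : HasFDerivAt (fun w : E => Ω (w - q)) (fderiv ℝ Ω (z - q)) z := by
      have := ((hd (z - q)).hasFDerivAt).comp z ((hasFDerivAt_id z).sub_const q)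
      simpa [Function.comp_def] using this
    exact h1.sub (hd z).hasFDerivAt
  have hbound : ∀ z ∈ (univ : Set E),
      ‖fderiv ℝ Ω (z - q) - fderiv ℝ Ω z‖ ≤ B * ‖q‖ := by
    intro z _
    have := grad_lip Ω hΩ B hB (z - q) z
    simpa [sub_sub_cancel_left, norm_neg] using this
  have := (convex_univ).norm_image_sub_le_of_norm_hasFDerivWithin_le
    (fun z _ => (hder z).hasFDerivWithinAt) hbound (mem_univ y) (mem_univ x)
  exact this

/-- Let `Ω : ℝ³ → ℝ` be `C²` with Hessian uniformly bounded in operator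
norm by `B`, let `β > 0` and suppose `|∇Ω| ≤ β` on the sublevel set `{Ω ≤ O}`. Then for
every `P` with `Ω(P) ≤ O` and all `k, q`,
`Ω(P − k − q) − Ω(P − q) ≥ −β·|k| − B·|k|·|q|`. -/
theorem statement6 (Ω : EuclideanSpace ℝ (Fin 3) → ℝ) (hΩ : ContDiff ℝ 2 Ω)
    (B : ℝ) (hB : ∀ p : EuclideanSpace ℝ (Fin 3), ‖iteratedFDeriv ℝ 2 Ω p‖ ≤ B)
    (β : ℝ) (hβ : 0 < β) (O : ℝ)
    (hgrad : ∀ q : EuclideanSpace ℝ (Fin 3), Ω q ≤ O → ‖gradient Ω q‖ ≤ β) :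
    ∀ P : EuclideanSpace ℝ (Fin 3), Ω P ≤ O →
      ∀ k q : EuclideanSpace ℝ (Fin 3),
        Ω (P - k - q) - Ω (P - q) ≥ -β * ‖k‖ - B * ‖k‖ * ‖q‖ := by
  intro P hP k q
  have hstep : Ω (P - k) ≥ Ω P - β * ‖k‖ := escape Ω hΩ β hβ O hgrad P hP k
  have hdiff := diff_bound Ω hΩ B hB q (P - k) P
  rw [Real.norm_eq_abs] at hdiff
  have hnorm : ‖P - k - P‖ = ‖k‖ := by
    rw [show P - k - P = -k by abel, norm_neg]
  rw [hnorm] at hdiff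
  have := abs_le.mp hdiff
  have hmul : B * ‖q‖ * ‖k‖ = B * ‖k‖ * ‖q‖ := by ring
  linarith [this.1, this.2]
end

section
/- Let Ω : ℝ³ → ℝ be continuously differentiable, let β ∈ (0, 1], and let O ∈ ℝ be such that |∇Ω(q)| ≤ β for every q ∈ ℝ³ with Ω(q) ≤ O. Define E₀(P) := inf_{k ∈ ℝ³} (Ω(P − k) + |k|). Then for every P ∈ ℝ³ with Ω(P) ≤ O and every k ∈ ℝ³ one has E₀(P − k) + |k| − E₀(P) ≥ (1 − β)·|k|. -/
open Set Filter Topology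

lemma norm_fderiv_eq_norm_gradient (Ω : EuclideanSpace ℝ (Fin 3) → ℝ) (x : EuclideanSpace ℝ (Fin 3)) :
    ‖fderiv ℝ Ω x‖ = ‖gradient Ω x‖ := by
  rw [gradient, LinearIsometryEquiv.norm_map]

lemma key_lemma (Ω : EuclideanSpace ℝ (Fin 3) → ℝ) (hΩ : ContDiff ℝ 1 Ω)
    (β : ℝ) (hβ0 : 0 ≤ β) (O : ℝ)
    (hgrad : ∀ q : EuclideanSpace ℝ (Fin 3), Ω q ≤ O → ‖gradient Ω q‖ ≤ β)
    (q : EuclideanSpace ℝ (Fin 3)) (hq : Ω q ≤ O) (v : EuclideanSpace ℝ (Fin 3)) :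
    Ω q - β * ‖v‖ ≤ Ω (q + v) := by
  by_contra h
  push_neg at h
  have hc : Continuous fun s : ℝ => Ω (q + s • v) := by
    exact hΩ.continuous.comp (by continuity)
  set A : Set ℝ := {s | s ∈ Icc (0:ℝ) 1 ∧ Ω q - β * ‖v‖ * s ≤ Ω (q + s • v)} with hA
  have hA0 : (0:ℝ) ∈ A := by
    constructor
    · exact ⟨le_refl _, zero_le_one⟩
    · simp
  have hAclosed : IsClosed A := by
    have : A = Icc (0:ℝ) 1 ∩ {s | Ω q - β * ‖v‖ * s ≤ Ω (q + s • v)} := rfl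
    rw [this]
    exact isClosed_Icc.inter (isClosed_le (by continuity) hc)
  have hAcomp : IsCompact A :=
    isCompact_Icc.of_isClosed_subset hAclosed (fun s hs => hs.1)
  set s₀ : ℝ := sSup A with hs₀def
  have hs₀ : s₀ ∈ A := hAcomp.sSup_mem ⟨0, hA0⟩
  have h1A : (1:ℝ) ∉ A := by
    intro h1
    have := h1.2
    simp only [one_smul, mul_one] at this
    linarith
  have hs₀1 : s₀ < 1 := lt_of_le_of_ne hs₀.1.2 (fun he => h1A (he ▸ hs₀))
  have h2 : ∀ s ∈ Ioc s₀ 1, Ω (q + s • v) < Ω q - β * ‖v‖ * s := by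
    intro s hs
    by_contra hle
    push_neg at hle
    have hmem : s ∈ A := ⟨⟨le_trans hs₀.1.1 hs.1.le, hs.2⟩, hle⟩
    exact absurd (le_csSup hAcomp.bddAbove hmem) (not_le.2 hs.1)
  have h3 : Ω (q + s₀ • v) ≤ Ω q - β * ‖v‖ * s₀ := by
    have hg : Tendsto (fun s : ℝ => Ω (q + s • v)) (𝓝[>] s₀) (𝓝 (Ω (q + s₀ • v))) :=
      (hc.tendsto s₀).mono_left nhdsWithin_le_nhds
    have hg2 : Tendsto (fun s : ℝ => Ω q - β * ‖v‖ * s) (𝓝[>] s₀) (𝓝 (Ω q - β * ‖v‖ * s₀)) :=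
      (((continuous_const.sub (continuous_const.mul continuous_id)).tendsto s₀).mono_left
        nhdsWithin_le_nhds)
    refine le_of_tendsto_of_tendsto hg hg2 ?_
    filter_upwards [Ioc_mem_nhdsGT_of_mem ⟨le_refl s₀, hs₀1⟩] with s hs
    exact (h2 s hs).le
  have h4 : ∀ s ∈ Icc s₀ 1, Ω (q + s • v) ≤ O := by
    intro s hs
    rcases eq_or_lt_of_le hs.1 with he | hlt
    · rw [← he]
      have : 0 ≤ β * ‖v‖ * s₀ := by
        have : (0:ℝ) ≤ s₀ := hs₀.1.1
        positivity
      linarith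
    · have := h2 s ⟨hlt, hs.2⟩
      have hs0 : 0 ≤ s := le_trans hs₀.1.1 hs.1
      have : 0 ≤ β * ‖v‖ * s := by positivity
      linarith [h2 s ⟨hlt, hs.2⟩]
  -- Mean value bound on the segment
  have hbound : ∀ x ∈ segment ℝ (q + s₀ • v) (q + v), ‖fderiv ℝ Ω x‖ ≤ β := by
    intro x hx
    rw [segment_eq_image] at hx
    obtain ⟨θ, hθ, rfl⟩ := hx
    have hx' : (1 - θ) • (q + s₀ • v) + θ • (q + v) = q + (s₀ + θ * (1 - s₀)) • v := by
      module
    show ‖fderiv ℝ Ω ((1 - θ) • (q + s₀ • v) + θ • (q + v))‖ ≤ β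
    rw [hx', norm_fderiv_eq_norm_gradient]
    apply hgrad
    apply h4
    constructor
    · nlinarith [hθ.1, hθ.2, hs₀1.le]
    · nlinarith [hθ.1, hθ.2, hs₀1.le]
  have hdiff : ∀ x ∈ segment ℝ (q + s₀ • v) (q + v), DifferentiableAt ℝ Ω x :=
    fun x _ => hΩ.differentiable one_ne_zero x
  have hmv := (convex_segment (q + s₀ • v) (q + v)).norm_image_sub_le_of_norm_fderiv_le
    hdiff hbound (left_mem_segment ℝ _ _) (right_mem_segment ℝ _ _)
  have hdist : (q + v) - (q + s₀ • v) = (1 - s₀) • v := by module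
  rw [hdist, norm_smul] at hmv
  have h5 : ‖(1 - s₀ : ℝ)‖ = 1 - s₀ := by
    rw [Real.norm_eq_abs]
    exact abs_of_nonneg (by linarith)
  rw [h5, Real.norm_eq_abs] at hmv
  have habs := abs_le.1 hmv
  have hlow := hs₀.2
  nlinarith [habs.1, habs.2]

/-- Let `Ω : ℝ³ → ℝ` be `C¹`, `β ∈ (0, 1]`, and `|∇Ω| ≤ β` on the sublevel
set `{Ω ≤ O}`. With `E₀(P) := inf_k (Ω(P - k) + |k|)`, for every `P` with `Ω(P) ≤ O` and
every `k` one has `E₀(P - k) + |k| - E₀(P) ≥ (1 - β)·|k|`. -/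
theorem statement8 (Ω : EuclideanSpace ℝ (Fin 3) → ℝ) (hΩ : ContDiff ℝ 1 Ω)
    (β : ℝ) (hβ0 : 0 < β) (hβ1 : β ≤ 1) (O : ℝ)
    (hgrad : ∀ q : EuclideanSpace ℝ (Fin 3), Ω q ≤ O → ‖gradient Ω q‖ ≤ β) :
    ∀ P : EuclideanSpace ℝ (Fin 3), Ω P ≤ O →
      ∀ k : EuclideanSpace ℝ (Fin 3),
        (⨅ k' : EuclideanSpace ℝ (Fin 3), (Ω (P - k - k') + ‖k'‖)) + ‖k‖
          - (⨅ k' : EuclideanSpace ℝ (Fin 3), (Ω (P - k') + ‖k'‖)) ≥ (1 - β) * ‖k‖ := by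
  intro P hP k
  have key := key_lemma Ω hΩ β hβ0.le O hgrad P hP
  -- lower bound on the E₀(P) family
  have hb1 : ∀ k' : EuclideanSpace ℝ (Fin 3), Ω P ≤ Ω (P - k') + ‖k'‖ := by
    intro k'
    have h := key (-k')
    rw [norm_neg] at h
    have he : P + -k' = P - k' := by module
    rw [he] at h
    nlinarith [norm_nonneg k']
  have hbdd : BddBelow (Set.range fun k' : EuclideanSpace ℝ (Fin 3) => Ω (P - k') + ‖k'‖) := by
    refine ⟨Ω P, ?_⟩
    rintro x ⟨k', rfl⟩
    exact hb1 k'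
  have h0 : (⨅ k' : EuclideanSpace ℝ (Fin 3), (Ω (P - k') + ‖k'‖)) ≤ Ω P := by
    have := ciInf_le hbdd (0 : EuclideanSpace ℝ (Fin 3))
    simpa using this
  have hmain : (⨅ k' : EuclideanSpace ℝ (Fin 3), (Ω (P - k') + ‖k'‖)) - β * ‖k‖
      ≤ ⨅ k' : EuclideanSpace ℝ (Fin 3), (Ω (P - k - k') + ‖k'‖) := by
    apply le_ciInf
    intro k'
    have h1 := key (-(k + k'))
    rw [norm_neg] at h1
    have he : P + -(k + k') = P - k - k' := by module
    rw [he] at h1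
    have h2 : ‖k + k'‖ ≤ ‖k‖ + ‖k'‖ := norm_add_le k k'
    have h3 : β * ‖k'‖ ≤ ‖k'‖ := by nlinarith [norm_nonneg k']
    nlinarith [norm_nonneg k', norm_nonneg k]
  have hr : (1 - β) * ‖k‖ = ‖k‖ - β * ‖k‖ := by ring
  linarith
end
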